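/- Let R be a set of vertices, k > 0, and let σ be a sequence of pebbling moves placing at least k pebbles on some vertex r ∈ R, of minimum total length among all sequences placing at least k pebbles on some vertex of R. Then in the signature D of σ, every vertex v ∈ R has outdegree strictly less than k/2. -/

import Mathlib

variable {V : Type*} [DecidableEq V]

/-- Result of a pebbling move `u → v`: remove two pebbles from `u`, add one to `v`. -/
def applyMove (p : V → ℕ) (u v : V) (x : V) : ℕ :=
  (if x = u then p x - 2 else p x) + (if x = v then 1 else 0)

/-- A list of moves is a valid sequence of pebbling moves from `p` in `G`. -/
def IsValidSeq (G : SimpleGraph V) : (V → ℕ) → List (V × V) → Prop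
  | _, [] => True
  | p, m :: rest => G.Adj m.1 m.2 ∧ 2 ≤ p m.1 ∧ IsValidSeq G (applyMove p m.1 m.2) rest

/-- The distribution after executing a sequence of pebbling moves. -/
def applySeq (p : V → ℕ) : List (V × V) → V → ℕ
  | [] => p
  | m :: rest => applySeq (applyMove p m.1 m.2) rest

/-- Indegree of a vertex in a directed multigraph (multiset of directed edges). -/
def indeg (D : Multiset (V × V)) (v : V) : ℕ :=
  Multiset.card (D.filter fun e => e.2 = v)

/-- Outdegree of a vertex in a directed multigraph. -/
def outdeg (D : Multiset (V × V)) (v : V) : ℕ :=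
  Multiset.card (D.filter fun e => e.1 = v)

/-- balance(D,p,v) = p(v) + indeg_D(v) - 2·outdeg_D(v). -/
def balance (D : Multiset (V × V)) (p : V → ℕ) (v : V) : ℤ :=
  (p v : ℤ) + (indeg D v : ℤ) - 2 * (outdeg D v : ℤ)

/-- `D` is orderable under `p`: some ordering of the edge multiset of `D`
is a valid sequence of pebbling moves. -/
def Orderable (G : SimpleGraph V) (D : Multiset (V × V)) (p : V → ℕ) : Prop :=
  ∃ σ : List (V × V), (σ : Multiset (V × V)) = D ∧ IsValidSeq G p σ

/-- A directed multigraph is acyclic if its edge relation admits no directed cycle. -/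
def DAcyclic (D : Multiset (V × V)) : Prop :=
  ∀ v : V, ¬ Relation.TransGen (fun a b => (a, b) ∈ D) v v

/-- The strongly connected component of `a` in the directed multigraph `D`. -/
def SCC (D : Multiset (V × V)) (a : V) : Set V :=
  {b | Relation.ReflTransGen (fun x y => (x, y) ∈ D) a b ∧
       Relation.ReflTransGen (fun x y => (x, y) ∈ D) b a}


/-! ### Auxiliary machinery -/

namespace PebblingAux
set_option linter.unusedSectionVars false
set_option linter.unusedVariables false

variable {W : Type*} [DecidableEq W]

/-- Consecutive pairs of a list. -/
def zipPairs (l : List W) : List (W × W) := l.zip l.tail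

@[simp] lemma zipPairs_nil : zipPairs ([] : List W) = [] := rfl
@[simp] lemma zipPairs_singleton (a : W) : zipPairs [a] = [] := rfl
@[simp] lemma zipPairs_cons₂ (a b : W) (t : List W) :
    zipPairs (a :: b :: t) = (a, b) :: zipPairs (b :: t) := rfl

lemma length_zipPairs (l : List W) : (zipPairs l).length = l.tail.length := by
  cases l with
  | nil => rfl
  | cons a t =>
    simp only [zipPairs, List.tail_cons]
    rw [List.length_zip]
    cases t <;> simp

lemma head_append_cons_eq (A : List W) (u w : W) (B C : List W) :
    (A ++ u :: B).head (by simp) = (A ++ u :: C).head (by simp) := by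
  cases A <;> simp

lemma zipPairs_append (X Y : List W) (hX : X ≠ []) (hY : Y ≠ []) :
    zipPairs (X ++ Y) = zipPairs X ++ (X.getLast hX, Y.head hY) :: zipPairs Y := by
  induction X with
  | nil => exact absurd rfl hX
  | cons a X ih =>
    cases X with
    | nil =>
      cases Y with
      | nil => exact absurd rfl hY
      | cons y t => simp [zipPairs]
    | cons b X' =>
      have h2 : (b :: X') ≠ [] := by simp
      have : (a :: b :: X') ++ Y = a :: b :: (X' ++ Y) := by simp
      rw [this]
      have h3 : b :: (X' ++ Y) = (b :: X') ++ Y := rfl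
      rw [show zipPairs (a :: b :: (X' ++ Y)) = (a, b) :: zipPairs (b :: (X' ++ Y)) from rfl,
          h3, ih h2]
      simp [List.getLast_cons h2]

lemma mem_zipPairs_split {u w : W} : ∀ {l : List W}, (u, w) ∈ zipPairs l →
    ∃ A B, l = A ++ u :: w :: B := by
  intro l
  induction l with
  | nil => intro h; simp at h
  | cons a t ih =>
    intro h
    cases t with
    | nil => simp at h
    | cons b t' =>
      rw [zipPairs_cons₂] at h
      rcases List.mem_cons.1 h with h | h
      · exact ⟨[], t', by simp_all⟩
      · obtain ⟨A, B, hAB⟩ := ih h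
        exact ⟨a :: A, B, by simp [hAB]⟩

lemma map_fst_zipPairs : ∀ (l : List W), (zipPairs l).map Prod.fst = l.dropLast := by
  intro l
  induction l with
  | nil => rfl
  | cons a t ih =>
    cases t with
    | nil => rfl
    | cons b t' => simp [zipPairs_cons₂, ih, List.dropLast_cons₂]

lemma map_snd_zipPairs : ∀ (l : List W), (zipPairs l).map Prod.snd = l.tail := by
  intro l
  induction l with
  | nil => rfl
  | cons a t ih =>
    cases t with
    | nil => rfl
    | cons b t' =>
      simp only [zipPairs_cons₂, List.map_cons, List.tail_cons]
      rw [show (zipPairs (b :: t')).map Prod.snd = (b :: t').tail from ih]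
      simp

lemma chain_mem_zipPairs {r : W → W → Prop} : ∀ {a : W} {l : List W}, List.Chain r a l →
    ∀ e ∈ zipPairs (a :: l), r e.1 e.2 := by
  intro a l
  induction l generalizing a with
  | nil => intro _ e he; simp at he
  | cons b t ih =>
    intro h e he
    rw [List.Chain, List.chain_cons] at h
    rw [zipPairs_cons₂, List.mem_cons] at he
    rcases he with he | he
    · subst he; exact h.1
    · exact ih h.2 e he

lemma nodup_zipPairs {l : List W} (h : l.Nodup) : (zipPairs l).Nodup := by
  have := map_fst_zipPairs l
  have hd : l.dropLast.Nodup := (List.dropLast_sublist l).nodup h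
  rw [← this] at hd
  exact hd.of_map _


/-! ### Paths (nonempty vertex lists) and potential functions -/

/-- A path object: head vertex plus remaining vertices. -/
abbrev Path (W : Type*) := W × List W

def pverts (P : Path W) : List W := P.1 :: P.2

lemma pverts_ne (P : Path W) : pverts P ≠ [] := by simp [pverts]

def plast (P : Path W) : W := (pverts P).getLast (pverts_ne P)

def pedges (P : Path W) : List (W × W) := zipPairs (pverts P)

def mkP (l : List W) (h : l ≠ []) : Path W := (l.head h, l.tail)

@[simp] lemma pverts_mkP (l : List W) (h : l ≠ []) : pverts (mkP l h) = l := by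
  simp [pverts, mkP]

lemma mkP_fst (l : List W) (h : l ≠ []) : (mkP l h).1 = l.head h := rfl

lemma plast_mkP (l : List W) (h : l ≠ []) : plast (mkP l h) = l.getLast h := by
  simp only [plast]
  congr 1
  exact pverts_mkP l h

lemma pedges_mkP (l : List W) (h : l ≠ []) : pedges (mkP l h) = zipPairs l := by
  simp [pedges]

/-- indicator -/
def ind (x y : W) : ℤ := if x = y then 1 else 0

lemma ind_nonneg (x y : W) : 0 ≤ ind x y := by unfold ind; split <;> simp

def kP (P : Path W) (x : W) : ℤ := 2 * ind x (plast P) - ind x P.1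

def kD (e : W × W) (x : W) : ℤ := 2 * ind x e.1 - ind x e.2

def Bp (paths : List (Path W)) (x : W) : ℤ := (paths.map (fun P => kP P x)).sum

def Bd (Δ : Multiset (W × W)) (x : W) : ℤ := (Δ.map (fun e => kD e x)).sum

@[simp] lemma Bd_zero (x : W) : Bd (0 : Multiset (W × W)) x = 0 := rfl

lemma Bd_cons (e : W × W) (Δ : Multiset (W × W)) (x : W) :
    Bd (e ::ₘ Δ) x = kD e x + Bd Δ x := by
  simp [Bd]

lemma Bd_count (Δ : Multiset (W × W)) (x : W) :
    Bd Δ x = 2 * (Multiset.count x (Δ.map Prod.fst) : ℤ)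
      - (Multiset.count x (Δ.map Prod.snd) : ℤ) := by
  induction Δ using Multiset.induction with
  | empty => simp
  | cons e Δ ih =>
    rw [Bd_cons, ih]
    simp only [Multiset.map_cons, Multiset.count_cons]
    unfold kD ind
    push_cast
    split_ifs <;> ring

lemma sum_count_of_subset {α : Type*} [DecidableEq α] (M : Multiset α) (s : Finset α)
    (h : M.toFinset ⊆ s) : ∑ x ∈ s, M.count x = Multiset.card M := by
  rw [← Multiset.toFinset_sum_count_eq M]
  refine (Finset.sum_subset h ?_).symm
  intro x _ hx
  exact Multiset.count_eq_zero_of_notMem (by simpa using hx)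

lemma applyMove_cast (p : W → ℕ) (u w x : W) (h : 2 ≤ p u) :
    (applyMove p u w x : ℤ) = (p x : ℤ) - 2 * ind x u + ind x w := by
  unfold applyMove ind
  split_ifs <;> subst_vars <;> push_cast <;> omega

/-- Discharge lemma: a multiset of delayed moves with potential `Bd` can be partially
executed so that the result dominates `base`. -/
lemma discharge (G : SimpleGraph W) : ∀ (n : ℕ) (Δ : Multiset (W × W)),
    Multiset.card Δ ≤ n → ∀ (q base : W → ℕ),
    (∀ e ∈ Δ, G.Adj e.1 e.2) →
    (∀ x, (base x : ℤ) + Bd Δ x ≤ q x) →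
    ∃ τ : List (W × W), IsValidSeq G q τ ∧ τ.length ≤ Multiset.card Δ ∧
      ∀ x, (base x : ℤ) ≤ applySeq q τ x := by
  intro n
  induction n with
  | zero =>
    intro Δ hΔ q base hadj hcond
    have : Δ = 0 := by
      rw [← Multiset.card_eq_zero]; omega
    subst this
    exact ⟨[], trivial, by simp, fun x => by simpa [applySeq] using hcond x⟩
  | succ n ih =>
    intro Δ hΔ q base hadj hcond
    by_cases hact : ∃ e ∈ Δ, 2 ≤ q e.1
    · obtain ⟨e, he, hqe⟩ := hact
      have hΔ' : Δ = e ::ₘ Δ.erase e := (Multiset.cons_erase he).symm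
      have hcard : Multiset.card (Δ.erase e) ≤ n := by
        have hce := Multiset.card_erase_of_mem he
        rw [hce, Nat.pred_eq_sub_one]
        have hpos : 0 < Multiset.card Δ := Multiset.card_pos.2 (fun h0 => by simp [h0] at he)
        omega
      have hcond' : ∀ x, (base x : ℤ) + Bd (Δ.erase e) x ≤ applyMove q e.1 e.2 x := by
        intro x
        have h1 := hcond x
        rw [hΔ', Bd_cons] at h1
        rw [applyMove_cast q e.1 e.2 x hqe]
        unfold kD at h1
        omega
      obtain ⟨τ, hτv, hτl, hτf⟩ := ih (Δ.erase e) hcard (applyMove q e.1 e.2) base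
        (fun e' he' => hadj e' (Multiset.mem_of_mem_erase he')) hcond'
      refine ⟨(e.1, e.2) :: τ, ⟨hadj e he, hqe, hτv⟩, ?_, ?_⟩
      · simp only [List.length_cons]
        rw [hΔ', Multiset.card_cons]
        omega
      · intro x
        exact hτf x
    · -- stuck: prove q already dominates base
      push_neg at hact
      refine ⟨[], trivial, by simp, ?_⟩
      -- show Bd Δ x ≥ 0 for all x
      have key : ∀ x, 0 ≤ Bd Δ x := by
        have hfst := fun x => Bd_count Δ x
        -- pointwise: count in fst-map ≤ count in snd-map
        have hle : ∀ x, Multiset.count x (Δ.map Prod.fst) ≤ Multiset.count x (Δ.map Prod.snd) := by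
          intro x
          by_cases hx : x ∈ Δ.map Prod.fst
          · obtain ⟨e, he, hex⟩ := Multiset.mem_map.1 hx
            have hq1 : q e.1 ≤ 1 := by
              have := hact e he
              omega
            have hc := hcond x
            rw [Bd_count] at hc
            have hx1 : (1 : ℤ) ≤ Multiset.count x (Δ.map Prod.fst) := by
              exact_mod_cast Multiset.one_le_count_iff_mem.2 hx
            subst hex
            have : (q e.1 : ℤ) ≤ 1 := by exact_mod_cast hq1
            omega
          · simp [Multiset.count_eq_zero_of_notMem hx]
        -- sums over common support are equal
        set s := (Δ.map Prod.fst).toFinset ∪ (Δ.map Prod.snd).toFinset with hs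
        have h1 : ∑ x ∈ s, (Δ.map Prod.fst).count x = Multiset.card Δ := by
          rw [sum_count_of_subset _ s (Finset.subset_union_left)]
          simp
        have h2 : ∑ x ∈ s, (Δ.map Prod.snd).count x = Multiset.card Δ := by
          rw [sum_count_of_subset _ s (Finset.subset_union_right)]
          simp
        have heq : ∀ x ∈ s, (Δ.map Prod.fst).count x = (Δ.map Prod.snd).count x := by
          rw [← Finset.sum_eq_sum_iff_of_le (fun i _ => hle i)]
          rw [h1, h2]
        intro x
        rw [Bd_count]
        by_cases hx : x ∈ s
        · have := heq x hx
          have hge := hle x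
          -- count fst = count snd; need 2*cf - cs ≥ 0 i.e. cf ≥ 0 fine, with cf = cs: 2cf - cf = cf ≥ 0
          rw [this]
          have : (0:ℤ) ≤ ((Δ.map Prod.snd).count x : ℤ) := by positivity
          omega
        · have hx1 : (Δ.map Prod.fst).count x = 0 := by
            apply Multiset.count_eq_zero_of_notMem
            intro hmem
            exact hx (Finset.mem_union_left _ (Multiset.mem_toFinset.2 hmem))
          have hx2 : (Δ.map Prod.snd).count x = 0 := by
            apply Multiset.count_eq_zero_of_notMem
            intro hmem
            exact hx (Finset.mem_union_right _ (Multiset.mem_toFinset.2 hmem))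
          rw [hx1, hx2]
          simp
      intro x
      have := hcond x
      have := key x
      simp only [applySeq]
      omega

/-! ### The main simulation lemma -/

def pathsE (paths : List (Path W)) : List (W × W) := paths.flatMap pedges

@[simp] lemma kD_mk (a b x : W) : kD (a, b) x = 2 * ind x a - ind x b := rfl

lemma Bp_decomp (l₁ l₂ : List (Path W)) (P P₁ P₂ : Path W) (x : W) :
    Bp (l₁ ++ P₁ :: P₂ :: l₂) x - Bp (l₁ ++ P :: l₂) x
      = kP P₁ x + kP P₂ x - kP P x := by
  simp [Bp]
  ring

lemma getLast_eq_of_eq {l₁ l₂ : List W} (h : l₁ = l₂) (h₁ : l₁ ≠ []) (h₂ : l₂ ≠ []) :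
    l₁.getLast h₁ = l₂.getLast h₂ := by subst h; rfl

lemma getLast_append_right (X Y : List W) (hY : Y ≠ []) (h : X ++ Y ≠ []) :
    (X ++ Y).getLast h = Y.getLast hY := by
  rw [List.getLast_append]
  simp [hY]

lemma le_cons_of_not_mem {a : W × W} {s : Multiset (W × W)} {t : List (W × W)}
    (h : s ≤ a ::ₘ (t : Multiset (W × W))) (ha : a ∉ s) :
    s ≤ (t : Multiset (W × W)) := by
  rw [Multiset.le_iff_count] at h ⊢
  intro b
  have hb' := h b
  rw [Multiset.count_cons] at hb'
  by_cases hb : b = a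
  · subst hb
    rw [Multiset.count_eq_zero.2 ha]
    omega
  · simpa [hb] using hb'

lemma main_lemma (G : SimpleGraph W) : ∀ (σ : List (W × W)) (p q : W → ℕ)
    (paths : List (Path W)) (Δ : Multiset (W × W)),
    IsValidSeq G p σ →
    (∀ e ∈ Δ, G.Adj e.1 e.2) →
    ((pathsE paths : Multiset (W × W)) ≤ (σ : Multiset (W × W))) →
    (∀ x, (p x : ℤ) + Bp paths x + Bd Δ x ≤ q x) →
    ∃ τ : List (W × W), IsValidSeq G q τ ∧
      τ.length + (pathsE paths).length ≤ σ.length + Multiset.card Δ ∧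
      ∀ x, (applySeq p σ x : ℤ) ≤ applySeq q τ x := by
  intro σ
  induction σ with
  | nil =>
    intro p q paths Δ hval hadj hle hcond
    have hE : pathsE paths = [] := by
      have h0 : (pathsE paths : Multiset (W × W)) = 0 := Multiset.le_zero.1 (by simpa using hle)
      exact_mod_cast (Multiset.coe_eq_zero _).1 h0
    have hBp : ∀ x, 0 ≤ Bp paths x := by
      intro x
      apply List.sum_nonneg
      intro z hz
      obtain ⟨P, hP, rfl⟩ := List.mem_map.1 hz
      have hPe : pedges P = [] := List.flatMap_eq_nil_iff.1 hE P hP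
      have h2 : P.2 = [] := by
        have hl := length_zipPairs (pverts P)
        unfold pedges at hPe
        rw [hPe] at hl
        simp only [pverts, List.tail_cons] at hl
        exact List.length_eq_zero_iff.1 hl.symm
      have hlast : plast P = P.1 := by
        simp [plast, pverts, h2]
      unfold kP
      rw [hlast]
      have := ind_nonneg x P.1
      omega
    obtain ⟨τ, h1, h2, h3⟩ := discharge G (Multiset.card Δ) Δ le_rfl q p hadj
      (fun x => by have := hcond x; have := hBp x; omega)
    exact ⟨τ, h1, by simp [hE]; omega, fun x => by simpa [applySeq] using h3 x⟩
  | cons m rest ih =>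
    obtain ⟨u, w⟩ := m
    intro p q paths Δ hval hadj hle hcond
    obtain ⟨hadj_uw, hpu, hrest⟩ := hval
    by_cases hin : (u, w) ∈ pathsE paths
    · -- SPLIT a path at the edge (u,w)
      obtain ⟨P, hPmem, hPe⟩ := List.mem_flatMap.1 hin
      obtain ⟨l₁, l₂, hpaths⟩ := List.append_of_mem hPmem
      unfold pedges at hPe
      obtain ⟨A, B, hAB⟩ := mem_zipPairs_split hPe
      have hX : A ++ [u] ≠ [] := by simp
      have hY : (w :: B) ≠ [] := by simp
      have hsplit : pverts P = (A ++ [u]) ++ (w :: B) := by rw [hAB]; simp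
      have hAB' : P.1 :: P.2 = A ++ u :: w :: B := hAB
      -- the two half-paths
      refine ?_
      have hedges : pedges P = pedges (mkP (A ++ [u]) hX) ++ (u, w) :: pedges (mkP (w :: B) hY) := by
        unfold pedges
        rw [pverts_mkP, pverts_mkP, hsplit, zipPairs_append (A ++ [u]) (w :: B) hX hY]
        have h1 : (A ++ [u]).getLast hX = u := List.getLast_concat
        have h2 : (w :: B).head hY = w := rfl
        rw [h1, h2]
      have hfc : (mkP (A ++ [u]) hX).1 = P.1 := by
        cases A with
        | nil =>
          injection hAB' with h1 h2
          simp [mkP, h1]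
        | cons a A' =>
          injection hAB' with h1 h2
          simp [mkP, h1]
      have hfd : plast (mkP (A ++ [u]) hX) = u := by
        rw [plast_mkP]
        exact List.getLast_concat
      have hfe : (mkP (w :: B) hY).1 = w := rfl
      have hff : plast (mkP (w :: B) hY) = plast P := by
        rw [plast_mkP]
        unfold plast
        rw [getLast_eq_of_eq hsplit (pverts_ne P) (by simp)]
        exact (getLast_append_right (A ++ [u]) (w :: B) hY (by simp)).symm
      have hBp' : ∀ x, Bp (l₁ ++ mkP (A ++ [u]) hX :: mkP (w :: B) hY :: l₂) x
          = Bp paths x + kD (u, w) x := by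
        intro x
        have hd := Bp_decomp l₁ l₂ P (mkP (A ++ [u]) hX) (mkP (w :: B) hY) x
        have hk : kP (mkP (A ++ [u]) hX) x + kP (mkP (w :: B) hY) x - kP P x
            = kD (u, w) x := by
          rw [kD_mk]
          unfold kP
          rw [hfc, hfd, hfe, hff]
          ring
        rw [hpaths]
        omega
      have hms : (pathsE paths : Multiset (W × W))
          = (u, w) ::ₘ (pathsE (l₁ ++ mkP (A ++ [u]) hX :: mkP (w :: B) hY :: l₂)
              : Multiset (W × W)) := by
        rw [hpaths]
        unfold pathsE
        simp only [List.flatMap_append, List.flatMap_cons, hedges]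
        simp only [← Multiset.coe_add, ← Multiset.cons_coe, ← Multiset.singleton_add]
        abel
      have hle' : (pathsE (l₁ ++ mkP (A ++ [u]) hX :: mkP (w :: B) hY :: l₂) : Multiset (W × W))
          ≤ (rest : Multiset (W × W)) := by
        have h1 : ((pathsE paths : List (W × W)) : Multiset (W × W))
            ≤ (u, w) ::ₘ (rest : Multiset (W × W)) := by
          rw [Multiset.cons_coe]
          exact hle
        rw [hms] at h1
        exact (Multiset.cons_le_cons_iff _).1 h1
      have hcond' : ∀ x, ((applyMove p u w x : ℤ))
          + Bp (l₁ ++ mkP (A ++ [u]) hX :: mkP (w :: B) hY :: l₂) x + Bd Δ x ≤ q x := by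
        intro x
        rw [applyMove_cast p u w x hpu, hBp' x, kD_mk]
        have := hcond x
        omega
      obtain ⟨τ, hτv, hτl, hτf⟩ := ih (applyMove p u w) q
        (l₁ ++ mkP (A ++ [u]) hX :: mkP (w :: B) hY :: l₂) Δ hrest hadj hle' hcond'
      refine ⟨τ, hτv, ?_, fun x => hτf x⟩
      have hlen : (pathsE paths).length
          = (pathsE (l₁ ++ mkP (A ++ [u]) hX :: mkP (w :: B) hY :: l₂)).length + 1 := by
        have := congrArg Multiset.card hms
        rw [Multiset.coe_card, Multiset.card_cons, Multiset.coe_card] at this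
        omega
      simp only [List.length_cons]
      omega
    · by_cases hq2 : 2 ≤ q u
      · -- PERFORM the move
        have hle' : (pathsE paths : Multiset (W × W)) ≤ (rest : Multiset (W × W)) := by
          refine le_cons_of_not_mem ?_ (by simpa using hin)
          rw [Multiset.cons_coe]
          exact hle
        have hcond' : ∀ x, ((applyMove p u w x : ℤ)) + Bp paths x + Bd Δ x
            ≤ applyMove q u w x := by
          intro x
          rw [applyMove_cast p u w x hpu, applyMove_cast q u w x hq2]
          have := hcond x
          omega
        obtain ⟨τ, hτv, hτl, hτf⟩ := ih (applyMove p u w) (applyMove q u w) paths Δ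
          hrest hadj hle' hcond'
        refine ⟨(u, w) :: τ, ⟨hadj_uw, hq2, hτv⟩, ?_, fun x => hτf x⟩
        simp only [List.length_cons]
        omega
      · -- DELAY the move
        have hle' : (pathsE paths : Multiset (W × W)) ≤ (rest : Multiset (W × W)) := by
          refine le_cons_of_not_mem ?_ (by simpa using hin)
          rw [Multiset.cons_coe]
          exact hle
        have hadj' : ∀ e ∈ (u, w) ::ₘ Δ, G.Adj e.1 e.2 := by
          intro e he
          rcases Multiset.mem_cons.1 he with he | he
          · subst he; exact hadj_uw
          · exact hadj e he
        have hcond' : ∀ x, ((applyMove p u w x : ℤ)) + Bp paths x + Bd ((u, w) ::ₘ Δ) x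
            ≤ q x := by
          intro x
          rw [applyMove_cast p u w x hpu, Bd_cons, kD_mk]
          have := hcond x
          omega
        obtain ⟨τ, hτv, hτl, hτf⟩ := ih (applyMove p u w) q paths ((u, w) ::ₘ Δ)
          hrest hadj' hle' hcond'
        refine ⟨τ, hτv, ?_, fun x => hτf x⟩
        rw [Multiset.card_cons] at hτl
        simp only [List.length_cons]
        omega

/-! ### Closed walk surgery -/

lemma zipPairs_cons_of_ne_nil (a : W) (t : List W) (ht : t ≠ []) :
    zipPairs (a :: t) = (a, t.head ht) :: zipPairs t := by
  cases t with
  | nil => exact absurd rfl ht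
  | cons b t' => rfl

lemma rotate_closed_walk (v u w : W) (M A B : List W)
    (hl : v :: M = A ++ u :: w :: B)
    (hlast : (v :: M).getLast (by simp) = v) :
    ∃ (OP : List W) (hOP : OP ≠ []),
      OP.head hOP = w ∧ OP.getLast hOP = u ∧
      (zipPairs (v :: M) : Multiset (W × W)) = (u, w) ::ₘ (zipPairs OP : Multiset (W × W)) := by
  cases A with
  | nil =>
    simp only [List.nil_append] at hl
    injection hl with h1 h2
    refine ⟨w :: B, by simp, rfl, ?_, ?_⟩
    · -- getLast (w :: B) = u
      have e1 : (v :: M).getLast (by simp) = (w :: B).getLast (by simp) := by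
        rw [getLast_eq_of_eq (show v :: M = v :: w :: B by rw [h2]) (by simp) (by simp)]
        exact List.getLast_cons (by simp)
      rw [← h1, ← hlast, e1]
    · rw [show v :: M = u :: w :: B by rw [h2, h1]]
      simp [zipPairs_cons₂, ← Multiset.cons_coe]
  | cons a A' =>
    have hT : A' ++ [u] ≠ [] := by simp
    have hY : (w :: B) ≠ [] := by simp
    refine ⟨(w :: B) ++ (A' ++ [u]), by simp, ?_, ?_, ?_⟩
    · simp
    · rw [getLast_append_right (w :: B) (A' ++ [u]) hT (by simp)]
      exact List.getLast_concat
    · -- the multiset identity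
      have hav : a = v := by
        have hl2 := hl
        rw [List.cons_append] at hl2
        injection hl2 with h1 h2
        exact h1.symm
      subst hav
      have hX : (a :: A') ++ [u] ≠ [] := by simp
      have hXY : a :: M = ((a :: A') ++ [u]) ++ (w :: B) := by
        rw [hl]; simp
      have zp1 : zipPairs (a :: M)
          = zipPairs ((a :: A') ++ [u]) ++ ((((a :: A') ++ [u]).getLast hX, w)) :: zipPairs (w :: B) := by
        rw [show zipPairs (a :: M) = zipPairs (((a :: A') ++ [u]) ++ (w :: B)) by rw [← hXY]]
        rw [zipPairs_append _ _ hX hY]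
        rfl
      have hgl : ((a :: A') ++ [u]).getLast hX = u := List.getLast_concat
      rw [hgl] at zp1
      have zp2 : zipPairs ((a :: A') ++ [u])
          = (a, (A' ++ [u]).head hT) :: zipPairs (A' ++ [u]) := by
        rw [show (a :: A') ++ [u] = a :: (A' ++ [u]) by simp]
        exact zipPairs_cons_of_ne_nil a (A' ++ [u]) hT
      have zp3 : zipPairs ((w :: B) ++ (A' ++ [u]))
          = zipPairs (w :: B) ++ ((w :: B).getLast hY, (A' ++ [u]).head hT) :: zipPairs (A' ++ [u]) := by
        exact zipPairs_append _ _ hY hT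
      have hglY : (w :: B).getLast hY = a := by
        have h3 : (a :: M).getLast (by simp) = (w :: B).getLast hY := by
          rw [getLast_eq_of_eq hXY (by simp) (by simp)]
          exact getLast_append_right _ _ hY (by simp)
        rw [← h3, hlast]
      rw [hglY] at zp3
      rw [zp1, zp2, zp3]
      simp only [← Multiset.coe_add, ← Multiset.cons_coe, ← Multiset.singleton_add]
      abel

/-- Deleting a closed walk from a valid sequence: a strictly shorter valid sequence
exists whose final distribution pointwise dominates. -/
lemma closed_walk_surgery (G : SimpleGraph W) : ∀ (σ : List (W × W)) (p : W → ℕ) (v : W)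
    (M : List W), IsValidSeq G p σ → M ≠ [] →
    (v :: M).getLast (by simp) = v →
    ((zipPairs (v :: M) : Multiset (W × W)) ≤ (σ : Multiset (W × W))) →
    ∃ τ, IsValidSeq G p τ ∧ τ.length + M.length ≤ σ.length ∧
      ∀ x, (applySeq p σ x : ℤ) ≤ applySeq p τ x := by
  intro σ
  induction σ with
  | nil =>
    intro p v M hval hM hlast hle
    exfalso
    have h0 : (zipPairs (v :: M) : Multiset (W × W)) = 0 := Multiset.le_zero.1 (by simpa using hle)
    have h1 : zipPairs (v :: M) = [] := by exact_mod_cast (Multiset.coe_eq_zero _).1 h0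
    have h2 := length_zipPairs (v :: M)
    rw [h1] at h2
    simp only [List.length_nil, List.tail_cons] at h2
    exact hM (List.length_eq_zero_iff.1 h2.symm)
  | cons m rest ih =>
    obtain ⟨u, w⟩ := m
    intro p v M hval hM hlast hle
    obtain ⟨hadj_uw, hpu, hrest⟩ := hval
    by_cases hin : (u, w) ∈ zipPairs (v :: M)
    · -- the current move is a walk edge: rotate and run the main lemma
      obtain ⟨A, B, hl⟩ := mem_zipPairs_split hin
      obtain ⟨OP, hOP, hhead, hglast, hms⟩ := rotate_closed_walk v u w M A B hl hlast
      have hle' : (zipPairs OP : Multiset (W × W)) ≤ (rest : Multiset (W × W)) := by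
        have h1 : (zipPairs (v :: M) : Multiset (W × W)) ≤ (u, w) ::ₘ (rest : Multiset (W × W)) := by
          rw [Multiset.cons_coe]
          exact hle
        rw [hms] at h1
        exact (Multiset.cons_le_cons_iff _).1 h1
      have hPE : pathsE [mkP OP hOP] = zipPairs OP := by
        unfold pathsE
        simp [pedges_mkP]
      have hcond' : ∀ x, ((applyMove p u w x : ℤ)) + Bp [mkP OP hOP] x + Bd 0 x ≤ p x := by
        intro x
        rw [applyMove_cast p u w x hpu, Bd_zero]
        have hBp1 : Bp [mkP OP hOP] x = kP (mkP OP hOP) x := by simp [Bp]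
        rw [hBp1]
        unfold kP
        rw [plast_mkP, hglast, mkP_fst, hhead]
        omega
      obtain ⟨τ, hτv, hτl, hτf⟩ := main_lemma G rest (applyMove p u w) p [mkP OP hOP] 0
        hrest (by simp) (by rw [hPE]; exact hle') hcond'
      refine ⟨τ, hτv, ?_, fun x => hτf x⟩
      have hlen1 : (zipPairs (v :: M)).length = M.length := by
        rw [length_zipPairs]; rfl
      have hlen2 : (zipPairs (v :: M)).length = (zipPairs OP).length + 1 := by
        have := congrArg Multiset.card hms
        rw [Multiset.coe_card, Multiset.card_cons, Multiset.coe_card] at this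
        omega
      rw [hPE] at hτl
      simp only [List.length_cons, Multiset.card_zero] at hτl ⊢
      omega
    · -- current move not a walk edge: keep it
      have hle' : (zipPairs (v :: M) : Multiset (W × W)) ≤ (rest : Multiset (W × W)) := by
        refine le_cons_of_not_mem ?_ (by simpa using hin)
        rw [Multiset.cons_coe]
        exact hle
      obtain ⟨τ, hτv, hτl, hτf⟩ := ih (applyMove p u w) v M hrest hM hlast hle'
      refine ⟨(u, w) :: τ, ⟨hadj_uw, hpu, hτv⟩, ?_, fun x => hτf x⟩
      simp only [List.length_cons]
      omega

/-! ### Count identity, excision, chains -/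

lemma indeg_cons (a b : W) (l : List (W × W)) (x : W) :
    indeg (((a, b) :: l : List (W × W)) : Multiset (W × W)) x
      = indeg (l : Multiset (W × W)) x + if x = b then 1 else 0 := by
  unfold indeg
  rw [← Multiset.cons_coe, Multiset.filter_cons]
  by_cases h : x = b
  · subst h; simp
  · rw [if_neg h]
    have h' : ¬((a, b).2 = x) := fun hh => h hh.symm
    simp [h']

lemma outdeg_cons (a b : W) (l : List (W × W)) (x : W) :
    outdeg (((a, b) :: l : List (W × W)) : Multiset (W × W)) x
      = outdeg (l : Multiset (W × W)) x + if x = a then 1 else 0 := by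
  unfold outdeg
  rw [← Multiset.cons_coe, Multiset.filter_cons]
  by_cases h : x = a
  · subst h; simp
  · rw [if_neg h]
    have h' : ¬((a, b).1 = x) := fun hh => h hh.symm
    simp [h']

lemma count_identity (G : SimpleGraph W) : ∀ (σ : List (W × W)) (p : W → ℕ),
    IsValidSeq G p σ → ∀ x, (applySeq p σ x : ℤ)
      = p x + indeg (σ : Multiset (W × W)) x - 2 * outdeg (σ : Multiset (W × W)) x := by
  intro σ
  induction σ with
  | nil =>
    intro p _ x
    simp [applySeq, indeg, outdeg]
  | cons m rest ih =>
    obtain ⟨u, w⟩ := m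
    intro p hval x
    obtain ⟨hadj, hpu, hrest⟩ := hval
    have hap : applySeq p ((u, w) :: rest) x = applySeq (applyMove p u w) rest x := rfl
    have h1 := ih (applyMove p u w) hrest x
    have hmove := applyMove_cast p u w x hpu
    have hind := indeg_cons u w rest x
    have houtd := outdeg_cons u w rest x
    unfold ind at hmove
    split_ifs at hmove hind houtd <;> omega

lemma excision (G : SimpleGraph W) (S : Set W) [DecidablePred (· ∈ S)] :
    ∀ (σ : List (W × W)) (p p' : W → ℕ),
    IsValidSeq G p σ →
    (∀ a b : W, a ∈ S → (a, b) ∈ σ → b ∈ S) →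
    (∀ x, x ∉ S → p' x = p x) →
    IsValidSeq G p' (σ.filter (fun m => decide (m.1 ∉ S))) := by
  intro σ
  induction σ with
  | nil => intro p p' _ _ _; trivial
  | cons m rest ih =>
    obtain ⟨u, w⟩ := m
    intro p p' hval hclos hagree
    obtain ⟨hadj, hpu, hrest⟩ := hval
    have hclos' : ∀ a b : W, a ∈ S → (a, b) ∈ rest → b ∈ S :=
      fun a b ha hm => hclos a b ha (List.mem_cons_of_mem _ hm)
    by_cases hu : u ∈ S
    · have hw : w ∈ S := hclos u w hu (List.mem_cons_self)
      have hfc : List.filter (fun m => decide (m.1 ∉ S)) ((u, w) :: rest)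
          = List.filter (fun m => decide (m.1 ∉ S)) rest := by
        rw [List.filter_cons, if_neg (by simpa using hu)]
      rw [hfc]
      apply ih (applyMove p u w) p' hrest hclos'
      intro x hx
      have hxu : x ≠ u := fun h => hx (h ▸ hu)
      have hxw : x ≠ w := fun h => hx (h ▸ hw)
      rw [hagree x hx]
      unfold applyMove
      rw [if_neg hxu, if_neg hxw]
      simp
    · have hfc : List.filter (fun m => decide (m.1 ∉ S)) ((u, w) :: rest)
          = (u, w) :: List.filter (fun m => decide (m.1 ∉ S)) rest := by
        rw [List.filter_cons, if_pos (by simpa using hu)]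
      rw [hfc]
      refine ⟨hadj, ?_, ?_⟩
      · rw [show p' (u, w).1 = p (u, w).1 from hagree u hu]; exact hpu
      · apply ih (applyMove p u w) (applyMove p' u w) hrest hclos'
        intro x hx
        unfold applyMove
        rw [hagree x hx]

lemma exists_nodup_chain {r : W → W → Prop} {a b : W} (h : Relation.ReflTransGen r a b) :
    ∃ L : List W, List.Chain r a L ∧ (a :: L).getLast (by simp) = b ∧ (a :: L).Nodup := by
  induction h using Relation.ReflTransGen.head_induction_on with
  | refl => exact ⟨[], List.Chain.nil, List.getLast_singleton _, by simp⟩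
  | @head a' c hac hcb ih =>
    obtain ⟨L, hch, hgl, hnd⟩ := ih
    by_cases hmem : a' ∈ c :: L
    · obtain ⟨C, D, hCD⟩ := List.append_of_mem hmem
      refine ⟨D, ?_, ?_, ?_⟩
      · have h1 : List.Chain' r (c :: L) := hch
        rw [hCD] at h1
        exact (List.isChain_append.1 h1).2.1
      · have h3 : (c :: L).getLast (by simp) = (a' :: D).getLast (by simp) := by
          rw [getLast_eq_of_eq hCD (by simp) (by simp)]
          exact getLast_append_right C (a' :: D) (by simp) (by simp)
        rw [← h3]
        exact hgl
      · have h4 := hnd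
        rw [hCD] at h4
        exact h4.sublist (List.sublist_append_right C (a' :: D))
    · refine ⟨c :: L, List.Chain.cons hac hch, ?_, List.nodup_cons.2 ⟨hmem, hnd⟩⟩
      rw [← hgl]
      exact List.getLast_cons (by simp)

lemma coe_le_of_nodup_subset {l : List (W × W)} {M : Multiset (W × W)}
    (hnd : l.Nodup) (hsub : ∀ x ∈ l, x ∈ M) : (l : Multiset (W × W)) ≤ M := by
  rw [Multiset.le_iff_count]
  intro a
  by_cases ha : a ∈ l
  · have h1 : Multiset.count a (l : Multiset (W × W)) ≤ 1 := by
      rw [Multiset.coe_count]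
      rw [← Multiset.coe_count]; exact Multiset.nodup_iff_count_le_one.1 (Multiset.coe_nodup.2 hnd) a
    have h2 : 1 ≤ Multiset.count a M := Multiset.one_le_count_iff_mem.2 (hsub a ha)
    omega
  · have h0 : Multiset.count a (l : Multiset (W × W)) = 0 := by
      rw [Multiset.count_eq_zero]
      simpa using ha
    omega

end PebblingAux

open PebblingAux in
/-- In a minimum sequence placing at least `k > 0` pebbles on some vertex of `R`,
every vertex of `R` has outdegree strictly less than `k/2` in the signature. -/
theorem minimum_signatures_target_set (G : SimpleGraph V) (p : V → ℕ) (R : Set V)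
    (k : ℕ) (hk : 0 < k) (σ : List (V × V)) (r : V) (hr : r ∈ R)
    (hσ : IsValidSeq G p σ) (hreach : k ≤ applySeq p σ r)
    (hmin : ∀ (τ : List (V × V)) (r' : V), r' ∈ R → IsValidSeq G p τ →
      k ≤ applySeq p τ r' → σ.length ≤ τ.length) :
    ∀ v ∈ R, 2 * outdeg (σ : Multiset (V × V)) v < k := by
  classical
  intro v hv
  by_contra hcon
  push_neg at hcon
  have ht1 : 1 ≤ outdeg (σ : Multiset (V × V)) v := by omega
  by_cases hcyc : ∃ m ∈ σ, m.2 = v ∧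
      Relation.ReflTransGen (fun a b => (a, b) ∈ (σ : Multiset (V × V))) v m.1
  · -- a closed walk through v exists: delete it, getting a shorter successful sequence
    obtain ⟨m, hmem, hm2, hreach'⟩ := hcyc
    obtain ⟨L, hch, hgl, hnd⟩ := exists_nodup_chain hreach'
    have hlast2 : (v :: (L ++ [v])).getLast (by simp) = v := by
      rw [getLast_eq_of_eq (show v :: (L ++ [v]) = (v :: L) ++ [v] by simp) (by simp) (by simp)]
      exact List.getLast_concat
    have hEsplit : zipPairs (v :: (L ++ [v]))
        = zipPairs (v :: L) ++ [((v :: L).getLast (by simp), v)] := by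
      rw [show zipPairs (v :: (L ++ [v])) = zipPairs ((v :: L) ++ [v]) by rw [List.cons_append]]
      rw [zipPairs_append (v :: L) [v] (by simp) (by simp)]
      rfl
    have hmemall : ∀ e ∈ zipPairs (v :: (L ++ [v])), e ∈ (σ : Multiset (V × V)) := by
      rw [hEsplit]
      intro e he
      rcases List.mem_append.1 he with he | he
      · have h1 := chain_mem_zipPairs hch e he
        simpa using h1
      · have he' : e = ((v :: L).getLast (by simp), v) := by simpa using he
        rw [he', hgl]
        have hmv : (m.1, v) = m := by rw [← hm2]
        rw [hmv]
        exact Multiset.mem_coe.2 hmem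
    have hndE : (zipPairs (v :: (L ++ [v]))).Nodup := by
      rw [hEsplit]
      refine List.Nodup.append (nodup_zipPairs hnd) (by simp) ?_
      intro e he1 he2
      have he2' : e = ((v :: L).getLast (by simp), v) := by simpa using he2
      have hsnd : e.2 ∈ L := by
        have hmap := map_snd_zipPairs (v :: L)
        have h3 : e.2 ∈ (zipPairs (v :: L)).map Prod.snd := List.mem_map_of_mem he1
        rw [hmap] at h3
        simpa using h3
      rw [he2'] at hsnd
      exact (List.nodup_cons.1 hnd).1 hsnd
    have hle := coe_le_of_nodup_subset hndE hmemall
    obtain ⟨τ, hτv, hτl, hτf⟩ := closed_walk_surgery G σ p v (L ++ [v]) hσ (by simp) hlast2 hle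
    have hk' : k ≤ applySeq p τ r := by
      have h1 := hτf r
      have h2 : (k : ℤ) ≤ (applySeq p σ r : ℤ) := by exact_mod_cast hreach
      exact_mod_cast le_trans h2 h1
    have hlen := hmin τ r hr hτv hk'
    have hpos : 1 ≤ (L ++ [v]).length := by simp
    omega
  · -- no closed walk through v: excise everything reachable from v
    push_neg at hcyc
    set S : Set V := {x | Relation.ReflTransGen (fun a b => (a, b) ∈ (σ : Multiset (V × V))) v x}
      with hS
    have hvS : v ∈ S := Relation.ReflTransGen.refl
    have hFval : IsValidSeq G p (σ.filter (fun m => decide (m.1 ∉ S))) := by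
      apply excision G S σ p p hσ ?_ (fun _ _ => rfl)
      intro a b ha hab
      exact Relation.ReflTransGen.tail ha (Multiset.mem_coe.2 hab)
    set F := σ.filter (fun m => decide (m.1 ∉ S)) with hF
    have hod : outdeg (F : Multiset (V × V)) v = 0 := by
      unfold outdeg
      rw [Multiset.card_eq_zero, Multiset.filter_eq_nil]
      intro e he he1
      have heF : e ∈ F := Multiset.mem_coe.1 he
      have h2 := (List.mem_filter.1 heF).2
      have heS : e.1 ∉ S := by simpa using h2
      exact heS (he1 ▸ hvS)
    have hid : indeg (F : Multiset (V × V)) v = indeg (σ : Multiset (V × V)) v := by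
      unfold indeg
      rw [Multiset.filter_coe, Multiset.filter_coe, Multiset.coe_card, Multiset.coe_card, hF]
      rw [List.filter_filter]
      apply congrArg
      apply List.filter_congr
      intro m' hm'
      by_cases h2 : m'.2 = v
      · have h1 : m'.1 ∉ S := fun hS1 => hcyc m' hm' h2 hS1
        simp [h2, h1]
      · simp [h2]
    have hciF := count_identity G F p hFval v
    have hciσ := count_identity G σ p hσ v
    have hfinal : (k : ℤ) ≤ (applySeq p F v : ℤ) := by
      have h0 : (0 : ℤ) ≤ (applySeq p σ v : ℤ) := by positivity
      have hcon' : (k : ℤ) ≤ 2 * (outdeg (σ : Multiset (V × V)) v : ℤ) := by exact_mod_cast hcon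
      rw [hciF, hod, hid]
      rw [hciσ] at h0
      push_cast
      omega
    have hkF : k ≤ applySeq p F v := by exact_mod_cast hfinal
    have hmin' := hmin F v hv hFval hkF
    have hlenF : F.length < σ.length := by
      obtain ⟨e, he⟩ := Multiset.card_pos_iff_exists_mem.1 (lt_of_lt_of_le zero_lt_one ht1)
      have he' := Multiset.mem_filter.1 he
      have heσ : e ∈ σ := Multiset.mem_coe.1 he'.1
      have he1 : e.1 = v := he'.2
      have hle2 : F.length ≤ σ.length := List.length_filter_le _ _
      rcases lt_or_eq_of_le hle2 with h | h
      · exact h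
      · exfalso
        rw [hF, ← List.countP_eq_length_filter] at h
        have hall := List.countP_eq_length.1 h e heσ
        have : e.1 ∉ S := by simpa using hall
        exact this (he1 ▸ hvS)
    omega
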